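/- (Theorem 1, convergence of a stochastic drift recursion to a set) Let C ⊆ ℝ^N be nonempty and closed, and let X(t), t ∈ ℕ, be an (F_t)-adapted ℝ^N-valued process on (Ω, F, P). Suppose: (i) V : ℝ^N → [0,∞) is continuous, V(x) = 0 for x ∈ C, V(x) > 0 for x ∉ C, for every ε > 0 one has inf{V(x) : dist(x, C) ≥ ε} > 0, and for every δ > 0 there exists ε > 0 such that dist(x, C) ≤ ε implies V(x) ≤ δ; (ii) φ : ℝ^N → [0,∞) is Borel measurable, φ(x) = 0 for x ∈ C, and for every ε > 0 one has inf{φ(x) : dist(x, C) ≥ ε} > 0; (iii) E[V(X(0))] < ∞ and there exist a constant m > 0 and sequences γ(t) > 0, ζ(t) > 0 with Σ_t γ(t) = ∞ and Σ_t ζ(t) < ∞, such that for every t, almost surely E[V(X(t+1)) | F_t] − V(X(t)) ≤ −γ(t)·φ(X(t)) + m·ζ(t)·(1 + V(X(t))). Then almost surely dist(X(t), C) → 0 as t → ∞, i.e., P[ lim_{t→∞} inf_{z ∈ C} ‖X(t) − z‖ = 0 ] = 1. -/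

import Mathlib

open MeasureTheory Filter

/-- Theorem 1: convergence of a stochastic drift recursion to a set.
Let `C ⊆ ℝ^N` be nonempty and closed, and `X t` an `(F t)`-adapted `ℝ^N`-valued process.
Given a continuous potential `V ≥ 0` vanishing exactly on `C` (with the uniformity
conditions (i)), a measurable `φ ≥ 0` vanishing on `C` with positive infimum away from `C`,
and the drift inequality (iii) with `∑ γ = ∞`, `∑ ζ < ∞`, the process converges to `C`
almost surely: `dist(X t, C) → 0` a.s. -/
theorem stmt4 {N : ℕ} {Ω : Type*} {m0 : MeasurableSpace Ω}
    (P : Measure Ω) [IsProbabilityMeasure P] (F : Filtration ℕ m0)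
    (C : Set (EuclideanSpace ℝ (Fin N))) (hCne : C.Nonempty) (hCcl : IsClosed C)
    (X : ℕ → Ω → EuclideanSpace ℝ (Fin N)) (hXadapted : Adapted F X)
    (V : EuclideanSpace ℝ (Fin N) → ℝ)
    (hVcont : Continuous V) (hVnonneg : ∀ x, 0 ≤ V x)
    (hVzero : ∀ x ∈ C, V x = 0) (hVpos : ∀ x ∉ C, 0 < V x)
    (hVinf : ∀ ε > (0 : ℝ), ∃ δ > (0 : ℝ), ∀ x, ε ≤ Metric.infDist x C → δ ≤ V x)
    (hVsmall : ∀ δ > (0 : ℝ), ∃ ε > (0 : ℝ), ∀ x, Metric.infDist x C ≤ ε → V x ≤ δ)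
    (φ : EuclideanSpace ℝ (Fin N) → ℝ) (hφmeas : Measurable φ) (hφnonneg : ∀ x, 0 ≤ φ x)
    (hφzero : ∀ x ∈ C, φ x = 0)
    (hφinf : ∀ ε > (0 : ℝ), ∃ δ > (0 : ℝ), ∀ x, ε ≤ Metric.infDist x C → δ ≤ φ x)
    (m : ℝ) (hm : 0 < m) (γ ζ : ℕ → ℝ) (hγpos : ∀ t, 0 < γ t) (hζpos : ∀ t, 0 < ζ t)
    (hγdiv : ¬ Summable γ) (hζsum : Summable ζ)
    (hVint : ∀ t, Integrable (fun ω => V (X t ω)) P)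
    (hdrift : ∀ t, ∀ᵐ ω ∂P,
      (P[fun ω => V (X (t + 1) ω)|F t]) ω - V (X t ω)
        ≤ -(γ t) * φ (X t ω) + m * ζ t * (1 + V (X t ω))) :
    ∀ᵐ ω ∂P, Tendsto (fun t => Metric.infDist (X t ω) C) atTop (nhds 0) := by
  classical
  -- the modified weight sequence
  set a : ℕ → ℝ := fun s => m * ζ s with ha
  have hapos : ∀ s, 0 < a s := fun s => mul_pos hm (hζpos s)
  have hasum : Summable a := hζsum.mul_left m
  set B : ℝ := ∑' s, a s with hB
  have hBnn : 0 ≤ B := tsum_nonneg fun s => (hapos s).le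
  have hsum_le : ∀ t, ∑ s ∈ Finset.range t, a s ≤ B :=
    fun t => Summable.sum_le_tsum _ (fun i _ => (hapos i).le) hasum
  set p : ℕ → ℝ := fun t => ∏ s ∈ Finset.range t, (1 + a s) with hp
  have hp1 : ∀ t, 1 ≤ p t := by
    intro t
    show (1:ℝ) ≤ ∏ s ∈ Finset.range t, (1 + a s)
    calc (1:ℝ) = ∏ _s ∈ Finset.range t, (1:ℝ) := by simp
      _ ≤ ∏ s ∈ Finset.range t, (1 + a s) :=
        Finset.prod_le_prod (fun i _ => by norm_num) (fun i _ => by linarith [hapos i])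
  have hppos : ∀ t, 0 < p t := fun t => lt_of_lt_of_le one_pos (hp1 t)
  have hpexp : ∀ t, p t ≤ Real.exp B := by
    intro t
    show p t ≤ Real.exp B
    calc p t ≤ ∏ s ∈ Finset.range t, Real.exp (a s) :=
          Finset.prod_le_prod (fun i _ => by linarith [hapos i])
            (fun i _ => by rw [add_comm]; exact Real.add_one_le_exp (a i))
      _ = Real.exp (∑ s ∈ Finset.range t, a s) := (Real.exp_sum _ _).symm
      _ ≤ Real.exp B := Real.exp_le_exp.2 (hsum_le t)
  set α : ℕ → ℝ := fun t => (p t)⁻¹ with hα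
  have hαpos : ∀ t, 0 < α t := fun t => inv_pos.2 (hppos t)
  have hα1 : ∀ t, α t ≤ 1 := fun t => inv_le_one_of_one_le₀ (hp1 t)
  have hαexp : ∀ t, Real.exp (-B) ≤ α t := by
    intro t
    rw [Real.exp_neg]
    exact inv_anti₀ (hppos t) (hpexp t)
  have hαrec : ∀ t, α (t + 1) * (1 + a t) = α t := by
    intro t
    have h1 : p (t + 1) = p t * (1 + a t) := Finset.prod_range_succ _ _
    have h2 : (0:ℝ) < 1 + a t := by linarith [hapos t]
    show (p (t + 1))⁻¹ * (1 + a t) = (p t)⁻¹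
    rw [h1, mul_inv, mul_assoc, inv_mul_cancel₀ h2.ne', mul_one]
  -- measurability helpers
  have hXm : ∀ s t, s ≤ t → Measurable[F t] (X s) := fun s t hst =>
    ((hXadapted s)).mono (F.mono hst) le_rfl
  -- integrability of γ t * φ(X t)
  have hqint : ∀ t, Integrable (fun ω => γ t * φ (X t ω)) P := by
    intro t
    have hg : Integrable (fun ω =>
        V (X t ω) - (P[fun ω => V (X (t + 1) ω)|F t]) ω + a t * (1 + V (X t ω))) P := by
      exact ((hVint t).sub integrable_condExp).add
        (((integrable_const (1:ℝ)).add (hVint t)).const_mul (a t))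
    refine hg.mono' ?_ ?_
    · exact ((hφmeas.comp ((hXadapted t).mono (F.le t) le_rfl)).const_mul
        (γ t)).aestronglyMeasurable
    · filter_upwards [hdrift t] with ω hω
      have h0 : 0 ≤ γ t * φ (X t ω) := mul_nonneg (hγpos t).le (hφnonneg _)
      rw [Real.norm_eq_abs, abs_of_nonneg h0]
      simp only [ha]
      nlinarith [hω]
  -- the supermartingale
  set Φ : ℕ → Ω → ℝ := fun t ω => ∑ s ∈ Finset.range t, α (s + 1) * (γ s * φ (X s ω)) with hΦ
  set Z : ℕ → ℝ := fun t => ∑ s ∈ Finset.range t, α (s + 1) * a s with hZ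
  set M : ℕ → Ω → ℝ := fun t ω => α t * V (X t ω) + Φ t ω - Z t with hM
  have hΦint : ∀ t, Integrable (Φ t) P := by
    intro t
    exact integrable_finset_sum _ fun s _ => (hqint s).const_mul (α (s + 1))
  have hMint : ∀ t, Integrable (M t) P := by
    intro t
    exact (((hVint t).const_mul (α t)).add (hΦint t)).sub (integrable_const (Z t))
  have hΦm : ∀ t u, t ≤ u + 1 → Measurable[F u] (Φ t) := by
    intro t u htu
    refine Finset.measurable_sum _ fun s hs => ?_
    have hsu : s ≤ u := by
      have := Finset.mem_range.1 hs
      omega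
    exact ((hφmeas.comp (hXm s u hsu)).const_mul (γ s)).const_mul (α (s + 1))
  have hMadp : StronglyAdapted F M := by
    intro t
    apply Measurable.stronglyMeasurable
    exact (((hVcont.measurable.comp (hXm t t le_rfl)).const_mul (α t)).add
      (hΦm t t t.le_succ)).sub measurable_const
  have hsuper : Supermartingale M F P := by
    refine supermartingale_nat hMadp hMint fun t => ?_
    have hf2int : Integrable (fun ω => Φ (t + 1) ω - Z (t + 1)) P :=
      (hΦint (t + 1)).sub (integrable_const _)
    have hsplit : M (t + 1) =
        (α (t + 1) • fun ω => V (X (t + 1) ω)) + fun ω => Φ (t + 1) ω - Z (t + 1) := by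
      funext ω
      simp only [hM, Pi.add_apply, Pi.smul_apply, smul_eq_mul]
      ring
    have h1 : P[M (t + 1)|F t] =ᵐ[P]
        P[α (t + 1) • fun ω => V (X (t + 1) ω)|F t]
          + P[fun ω => Φ (t + 1) ω - Z (t + 1)|F t] := by
      rw [hsplit]
      exact condExp_add (by exact Integrable.smul (α (t + 1)) (hVint (t + 1))) hf2int _
    have h2 : P[α (t + 1) • fun ω => V (X (t + 1) ω)|F t]
        =ᵐ[P] α (t + 1) • P[fun ω => V (X (t + 1) ω)|F t] := condExp_smul _ _ _
    have h3 : P[fun ω => Φ (t + 1) ω - Z (t + 1)|F t] = fun ω => Φ (t + 1) ω - Z (t + 1) := by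
      refine condExp_of_stronglyMeasurable (F.le t) ?_ hf2int
      exact ((hΦm (t + 1) t le_rfl).sub measurable_const).stronglyMeasurable
    filter_upwards [h1, h2, hdrift t] with ω hω1 hω2 hd
    rw [hω1]
    simp only [Pi.add_apply, hω2, Pi.smul_apply, smul_eq_mul, h3]
    have hΦs : Φ (t + 1) ω = Φ t ω + α (t + 1) * (γ t * φ (X t ω)) := Finset.sum_range_succ _ _
    have hZs : Z (t + 1) = Z t + α (t + 1) * a t := Finset.sum_range_succ _ _
    have hmul := mul_le_mul_of_nonneg_left hd (hαpos (t + 1)).le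
    show _ ≤ M t ω
    simp only [hM]
    rw [hΦs, hZs, ← hαrec t]
    simp only [ha] at *
    nlinarith [hmul]
  -- uniform L¹ bound
  have hZnn : ∀ t, 0 ≤ Z t := fun t =>
    Finset.sum_nonneg fun s _ => mul_nonneg (hαpos _).le (hapos _).le
  have hZle : ∀ t, Z t ≤ B := by
    intro t
    calc Z t ≤ ∑ s ∈ Finset.range t, a s :=
          Finset.sum_le_sum fun s _ => mul_le_of_le_one_left (hapos s).le (hα1 (s + 1))
      _ ≤ B := hsum_le t
  have hΦnn : ∀ t ω, 0 ≤ Φ t ω := fun t ω =>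
    Finset.sum_nonneg fun s _ =>
      mul_nonneg (hαpos _).le (mul_nonneg (hγpos s).le (hφnonneg _))
  have hMlb : ∀ t ω, -B ≤ M t ω := by
    intro t ω
    have h1 : 0 ≤ α t * V (X t ω) := mul_nonneg (hαpos t).le (hVnonneg _)
    have h2 := hZle t
    have h3 := hΦnn t ω
    simp only [hM]
    linarith
  have hEM : ∀ t, ∫ ω, M t ω ∂P ≤ ∫ ω, M 0 ω ∂P := by
    intro t
    have h1 := hsuper.2.1 0 t (Nat.zero_le t)
    have h2 : ∫ ω, (P[M t|F 0]) ω ∂P = ∫ ω, M t ω ∂P := integral_condExp (F.le 0)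
    calc ∫ ω, M t ω ∂P = ∫ ω, (P[M t|F 0]) ω ∂P := h2.symm
      _ ≤ ∫ ω, M 0 ω ∂P := integral_mono_ae integrable_condExp (hMint 0) h1
  set R := (∫ ω, M 0 ω ∂P + 2 * B).toNNReal with hR
  have hMbd : ∀ t, eLpNorm (M t) 1 P ≤ (R : ENNReal) := by
    intro t
    have h2 : ∫ ω, ‖M t ω‖ ∂P ≤ ∫ ω, (M t ω + 2 * B) ∂P := by
      refine integral_mono (hMint t).norm ((hMint t).add (integrable_const _)) ?_
      intro ω
      have := hMlb t ω
      show ‖M t ω‖ ≤ M t ω + 2 * B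
      rw [Real.norm_eq_abs]
      rcases abs_cases (M t ω) with ⟨h, _⟩ | ⟨h, _⟩ <;> linarith
    have h3 : ∫ ω, (M t ω + 2 * B) ∂P = ∫ ω, M t ω ∂P + 2 * B := by
      rw [integral_add (hMint t) (integrable_const _), integral_const]
      simp
    have h1 : ∫ ω, ‖M t ω‖ ∂P ≤ ∫ ω, M 0 ω ∂P + 2 * B := by
      have := hEM t
      rw [h3] at h2
      linarith
    calc eLpNorm (M t) 1 P = ENNReal.ofReal (∫ ω, ‖M t ω‖ ∂P) := by
          rw [eLpNorm_one_eq_lintegral_enorm,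
            ← ofReal_integral_norm_eq_lintegral_enorm (hMint t)]
      _ ≤ ENNReal.ofReal (∫ ω, M 0 ω ∂P + 2 * B) := ENNReal.ofReal_le_ofReal h1
      _ = (R : ENNReal) := rfl
  -- a.s. convergence of M
  have hconv : ∀ᵐ ω ∂P, ∃ c, Tendsto (fun t => M t ω) atTop (nhds c) := by
    have hneg : ∀ᵐ ω ∂P, ∃ c, Tendsto (fun t => (-M) t ω) atTop (nhds c) := by
      refine hsuper.neg.exists_ae_tendsto_of_bdd (R := R) fun n => ?_
      rw [show (-M) n = -(M n) from rfl, eLpNorm_neg]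
      exact hMbd n
    filter_upwards [hneg] with ω hω
    obtain ⟨c, hc⟩ := hω
    refine ⟨-c, ?_⟩
    have := hc.neg
    simp only [Pi.neg_apply, neg_neg] at this
    exact this
  -- deterministic convergence of Z
  have hZbsum : Summable (fun s => α (s + 1) * a s) :=
    Summable.of_nonneg_of_le (fun s => mul_nonneg (hαpos _).le (hapos _).le)
      (fun s => mul_le_of_le_one_left (hapos s).le (hα1 (s + 1))) hasum
  have hZtend : Tendsto Z atTop (nhds (∑' s, α (s + 1) * a s)) := hZbsum.hasSum.tendsto_sum_nat
  -- main pointwise argument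
  filter_upwards [hconv] with ω hω
  obtain ⟨L, hL⟩ := hω
  have hABconv : Tendsto (fun t => M t ω + Z t) atTop (nhds (L + ∑' s, α (s + 1) * a s)) :=
    hL.add hZtend
  obtain ⟨c, hc⟩ : ∃ c, ∀ t, M t ω + Z t ≤ c := by
    obtain ⟨c, hc⟩ := hABconv.bddAbove_range
    exact ⟨c, fun t => hc ⟨t, rfl⟩⟩
  have hbnn : ∀ s, 0 ≤ α (s + 1) * (γ s * φ (X s ω)) := fun s =>
    mul_nonneg (hαpos _).le (mul_nonneg (hγpos s).le (hφnonneg _))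
  have hbsum : Summable (fun s => α (s + 1) * (γ s * φ (X s ω))) := by
    refine summable_of_sum_range_le (c := c) hbnn fun n => ?_
    have h1 : Φ n ω ≤ M n ω + Z n := by
      have h0 : 0 ≤ α n * V (X n ω) := mul_nonneg (hαpos n).le (hVnonneg _)
      simp only [hM]
      linarith
    calc (∑ s ∈ Finset.range n, α (s + 1) * (γ s * φ (X s ω))) = Φ n ω := rfl
      _ ≤ M n ω + Z n := h1
      _ ≤ c := hc n
  have hΦtend : Tendsto (fun t => Φ t ω)
      atTop (nhds (∑' s, α (s + 1) * (γ s * φ (X s ω)))) :=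
    hbsum.hasSum.tendsto_sum_nat
  have hAtend : Tendsto (fun t => α t * V (X t ω)) atTop
      (nhds ((L + ∑' s, α (s + 1) * a s) - ∑' s, α (s + 1) * (γ s * φ (X s ω)))) := by
    have heq : ∀ t, (M t ω + Z t) - Φ t ω = α t * V (X t ω) := by
      intro t
      simp only [hM]
      ring
    exact (hABconv.sub hΦtend).congr heq
  set Ainf : ℝ := (L + ∑' s, α (s + 1) * a s) - ∑' s, α (s + 1) * (γ s * φ (X s ω)) with hAinfdef
  -- summability of γ s * φ(X s ω)
  have hγφsum : Summable (fun s => γ s * φ (X s ω)) := by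
    refine Summable.of_nonneg_of_le (fun s => mul_nonneg (hγpos s).le (hφnonneg _))
      (fun s => ?_) (hbsum.mul_left (Real.exp B))
    have hq0 : 0 ≤ γ s * φ (X s ω) := mul_nonneg (hγpos s).le (hφnonneg _)
    have h2 : Real.exp (-B) * (γ s * φ (X s ω)) ≤ α (s + 1) * (γ s * φ (X s ω)) :=
      mul_le_mul_of_nonneg_right (hαexp (s + 1)) hq0
    have h3 : Real.exp B * (Real.exp (-B) * (γ s * φ (X s ω)))
        ≤ Real.exp B * (α (s + 1) * (γ s * φ (X s ω))) :=
      mul_le_mul_of_nonneg_left h2 (Real.exp_pos B).le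
    have h4 : Real.exp B * (Real.exp (-B) * (γ s * φ (X s ω))) = γ s * φ (X s ω) := by
      rw [← mul_assoc, ← Real.exp_add]
      simp
    linarith
  -- frequently φ is small
  have hfreq : ∀ δ > (0:ℝ), ∃ᶠ t in atTop, φ (X t ω) < δ := by
    intro δ hδ
    by_contra hcon
    rw [not_frequently] at hcon
    obtain ⟨T, hT⟩ := eventually_atTop.1 hcon
    apply hγdiv
    have h1 : Summable (fun t => γ (t + T) * φ (X (t + T) ω)) :=
      (summable_nat_add_iff T).2 hγφsum
    have h2 : Summable (fun t => γ (t + T)) := by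
      refine Summable.of_nonneg_of_le (fun t => (hγpos _).le) (fun t => ?_) (h1.mul_left δ⁻¹)
      have h3 : δ ≤ φ (X (t + T) ω) := not_lt.1 (hT (t + T) (Nat.le_add_left T t))
      have h4 : γ (t + T) * δ ≤ γ (t + T) * φ (X (t + T) ω) :=
        mul_le_mul_of_nonneg_left h3 (hγpos _).le
      calc γ (t + T) = δ⁻¹ * (γ (t + T) * δ) := by
            field_simp
        _ ≤ δ⁻¹ * (γ (t + T) * φ (X (t + T) ω)) :=
            mul_le_mul_of_nonneg_left h4 (inv_nonneg.2 hδ.le)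
    exact (summable_nat_add_iff T).1 h2
  -- the limit of α t * V (X t ω) is 0
  have hAinfnn : 0 ≤ Ainf :=
    ge_of_tendsto' hAtend fun t => mul_nonneg (hαpos t).le (hVnonneg _)
  have hAinfle : ∀ η > (0:ℝ), Ainf ≤ η := by
    intro η hη
    obtain ⟨ε, hε, hεV⟩ := hVsmall η hη
    obtain ⟨δ, hδ, hδφ⟩ := hφinf ε hε
    have hfr : ∃ᶠ t in atTop, α t * V (X t ω) ≤ η := by
      refine (hfreq δ hδ).mono fun t ht => ?_
      have h1 : Metric.infDist (X t ω) C ≤ ε := by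
        by_contra h2
        exact absurd (hδφ _ (not_le.1 h2).le) (not_le.2 ht)
      have h2 := hεV _ h1
      have h3 : α t * V (X t ω) ≤ 1 * V (X t ω) :=
        mul_le_mul_of_nonneg_right (hα1 t) (hVnonneg _)
      linarith
    by_contra hcon
    push_neg at hcon
    have hev : ∀ᶠ t in atTop, η < α t * V (X t ω) :=
      hAtend.eventually (eventually_gt_nhds hcon)
    obtain ⟨t, h1, h2⟩ := (hfr.and_eventually hev).exists
    linarith
  have hA0 : Ainf = 0 := by
    by_contra h
    have h1 : 0 < Ainf := lt_of_le_of_ne hAinfnn (Ne.symm h)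
    linarith [hAinfle (Ainf / 2) (by linarith)]
  -- V (X t ω) → 0
  have hVt : Tendsto (fun t => V (X t ω)) atTop (nhds 0) := by
    have hg : Tendsto (fun t => Real.exp B * (α t * V (X t ω))) atTop (nhds 0) := by
      have h1 := hAtend.const_mul (Real.exp B)
      rw [hA0, mul_zero] at h1
      exact h1
    refine squeeze_zero (fun t => hVnonneg _) (fun t => ?_) hg
    have h1 : p t * (α t * V (X t ω)) = V (X t ω) := by
      show p t * ((p t)⁻¹ * V (X t ω)) = V (X t ω)
      rw [← mul_assoc, mul_inv_cancel₀ (hppos t).ne', one_mul]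
    have h2 : p t * (α t * V (X t ω)) ≤ Real.exp B * (α t * V (X t ω)) :=
      mul_le_mul_of_nonneg_right (hpexp t) (mul_nonneg (hαpos t).le (hVnonneg _))
    linarith
  -- conclude: infDist (X t ω) C → 0
  refine tendsto_order.2 ⟨fun b hb => ?_, fun b hb => ?_⟩
  · exact Eventually.of_forall fun t => lt_of_lt_of_le hb Metric.infDist_nonneg
  · obtain ⟨δ, hδ, hδV⟩ := hVinf b hb
    have hev : ∀ᶠ t in atTop, V (X t ω) < δ := hVt.eventually (eventually_lt_nhds hδ)
    refine hev.mono fun t ht => ?_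
    by_contra h
    exact absurd (hδV _ (not_lt.1 h)) (not_le.2 ht)
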